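/- arXiv:1905.11495 — 4 statements merged into one kernel-verified Lean document; each statement's English description precedes it below -/
import Mathlib

section
/- In A_inf = W(O_C^♭) with ε, μ = [ε]−1, ξ = μ/φ^{−1}(μ), ξ̃ = φ(μ)/μ as above, the pairs (p, ξ), (p, ξ̃), (p, μ) and (ξ̃, μ) are all regular sequences on A_inf. -/
/-- `(a, b)` is a regular sequence on `A`: `a` is a non-zerodivisor on `A`
and `b` is a non-zerodivisor on `A/a`. -/
def RegPair (A : Type) [CommRing A] (a b : A) : Prop :=
  (∀ x : A, a * x = 0 → x = 0) ∧
    (∀ x : A ⧸ Ideal.span {a},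
      (Ideal.Quotient.mk (Ideal.span {a}) b) * x = 0 → x = 0)

section Aux

variable (p : ℕ) [hp : Fact p.Prime]
set_option linter.unusedSectionVars false
variable (O : Type) [CommRing O] [IsDomain O] [CharP O p] [PerfectRing O p]

local notation "𝕎" => WittVector p O

lemma aux_p_nzd (x : 𝕎) (h : (p : 𝕎) * x = 0) : x = 0 := by
  have h' : WittVector.verschiebung (WittVector.frobenius x) = 0 := by
    rw [WittVector.verschiebung_frobenius, mul_comm]; exact h
  ext n
  have := congrArg (fun z => WittVector.coeff z (n + 1)) h'
  simp only [WittVector.verschiebung_coeff_succ, WittVector.coeff_frobenius_charP,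
    WittVector.zero_coeff] at this
  simpa [pow_eq_zero_iff hp.out.ne_zero] using this

lemma aux_coeff_zero_dvd (x : 𝕎) (h : x.coeff 0 = 0) :
    ∃ y : 𝕎, x = (p : 𝕎) * y ∧ ∀ n, x.coeff (n + 1) = y.coeff n ^ p := by
  set y0 : 𝕎 := WittVector.mk p (fun n => x.coeff (n + 1)) with hy0
  obtain ⟨z, hz⟩ := (WittVector.frobenius_bijective p O).surjective y0
  refine ⟨z, ?_, fun n => ?_⟩
  · have : WittVector.verschiebung y0 = x := by
      ext n
      cases n with
      | zero => rw [WittVector.verschiebung_coeff_zero, h]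
      | succ n => rw [WittVector.verschiebung_coeff_succ, hy0, WittVector.coeff_mk]
    rw [← this, ← hz, WittVector.verschiebung_frobenius, mul_comm]
  · rw [← WittVector.coeff_frobenius_charP, hz, hy0, WittVector.coeff_mk]

lemma aux_nzd (b : 𝕎) (hb : WittVector.constantCoeff b ≠ 0) :
    ∀ x : 𝕎, b * x = 0 → x = 0 := by
  have key : ∀ n : ℕ, ∀ x : 𝕎, b * x = 0 → x.coeff n = 0 := by
    intro n
    induction n with
    | zero =>
      intro x h
      have : WittVector.constantCoeff b * WittVector.constantCoeff x = 0 := by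
        rw [← map_mul, h, map_zero]
      exact (mul_eq_zero.1 this).resolve_left hb
    | succ n ih =>
      intro x h
      have h0 : x.coeff 0 = 0 := by
        have : WittVector.constantCoeff b * WittVector.constantCoeff x = 0 := by
          rw [← map_mul, h, map_zero]
        exact (mul_eq_zero.1 this).resolve_left hb
      obtain ⟨y, hxy, hcoeff⟩ := aux_coeff_zero_dvd p O x h0
      have hby : b * y = 0 := by
        apply aux_p_nzd p O
        rw [show (p : 𝕎) * (b * y) = b * ((p : 𝕎) * y) by ring, ← hxy, h]
      rw [hcoeff n, ih y hby, zero_pow hp.out.ne_zero]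
  intro x h
  ext n
  rw [key n x h, WittVector.zero_coeff]

lemma aux_const_p : WittVector.constantCoeff ((p : ℕ) : 𝕎) = 0 := by
  rw [map_natCast]
  exact CharP.cast_eq_zero O p

lemma aux_regpair_p (b : 𝕎) (hb : WittVector.constantCoeff b ≠ 0) :
    (∀ x : 𝕎, (p : 𝕎) * x = 0 → x = 0) ∧
      (∀ x : 𝕎 ⧸ Ideal.span {((p : ℕ) : 𝕎)},
        (Ideal.Quotient.mk (Ideal.span {((p : ℕ) : 𝕎)}) b) * x = 0 → x = 0) := by
  constructor
  · exact aux_p_nzd p O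
  · intro x hx
    obtain ⟨z, rfl⟩ := Ideal.Quotient.mk_surjective x
    rw [← map_mul, Ideal.Quotient.eq_zero_iff_mem, Ideal.mem_span_singleton] at hx
    obtain ⟨w, hw⟩ := hx
    have h0 : WittVector.constantCoeff (b * z) = 0 := by
      rw [hw, map_mul, aux_const_p, zero_mul]
    rw [map_mul] at h0
    have hz0 : WittVector.constantCoeff z = 0 := (mul_eq_zero.1 h0).resolve_left hb
    obtain ⟨y, hxy, -⟩ := aux_coeff_zero_dvd p O z hz0
    rw [Ideal.Quotient.eq_zero_iff_mem, Ideal.mem_span_singleton]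
    exact ⟨y, hxy⟩

lemma aux_geom_ne (ε : O) (hε : ε ≠ 1) :
    (∑ k ∈ Finset.range p, ε ^ k) ≠ 0 := by
  intro h
  have h1 : (∑ k ∈ Finset.range p, ε ^ k) * (ε - 1) = ε ^ p - 1 := geom_sum_mul ε p
  rw [h, zero_mul] at h1
  have h2 : (ε - 1) ^ p = ε ^ p - 1 ^ p := sub_pow_char (p := p) (x := ε) (y := 1)
  rw [one_pow] at h2
  have : (ε - 1) ^ p = 0 := by rw [h2, ← h1]
  exact hε (sub_eq_zero.1 (pow_eq_zero_iff hp.out.ne_zero |>.1 this)) |>.elim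
  
end Aux


/-- In `A_inf = W(O_C^♭)` (with `O_C^♭` abstracted as a
perfect domain `O` of characteristic `p`, e.g. the tilt of `O_C`), with
`ε` the fixed nontrivial compatible system of primitive `p`-power roots of
unity, `μ = [ε] - 1`, `ξ = μ / φ⁻¹(μ) = 1 + [ε^{1/p}] + ⋯ + [ε^{1/p}]^{p-1}`
and `ξ̃ = φ(μ)/μ = 1 + [ε] + ⋯ + [ε]^{p-1}`, the pairs
`(p, ξ)`, `(p, ξ̃)`, `(p, μ)` and `(ξ̃, μ)` are all regular sequences. -/
theorem ainf_regular_sequences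
    (p : ℕ) [Fact p.Prime]
    (O : Type) [CommRing O] [IsDomain O] [CharP O p] [PerfectRing O p]
    (ε : O) (hε : ε ≠ 1) :
    let A := WittVector p O
    let μ : A := WittVector.teichmuller p ε - 1
    let ξ : A := ∑ k ∈ Finset.range p,
      (WittVector.teichmuller p ((frobeniusEquiv O p).symm ε)) ^ k
    let ξt : A := ∑ k ∈ Finset.range p, (WittVector.teichmuller p ε) ^ k
    RegPair A (p : A) ξ ∧ RegPair A (p : A) ξt ∧
      RegPair A (p : A) μ ∧ RegPair A ξt μ := by
  intro A μ ξ ξt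
  -- constant coefficients of the relevant elements
  have hμ0 : WittVector.constantCoeff μ = ε - 1 := by
    show WittVector.constantCoeff (WittVector.teichmuller p ε - 1) = ε - 1
    rw [map_sub, map_one, WittVector.constantCoeff_apply, WittVector.teichmuller_coeff_zero]
  have hμne : WittVector.constantCoeff μ ≠ 0 := by
    rw [hμ0]; exact sub_ne_zero.2 hε
  have hgeom : ∀ δ : O, WittVector.constantCoeff
      (∑ k ∈ Finset.range p, (WittVector.teichmuller p δ) ^ k) =
      ∑ k ∈ Finset.range p, δ ^ k := by
    intro δ
    rw [map_sum]
    refine Finset.sum_congr rfl fun k _ => ?_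
    rw [map_pow, WittVector.constantCoeff_apply, WittVector.teichmuller_coeff_zero]
  have hξtne : WittVector.constantCoeff ξt ≠ 0 := by
    show WittVector.constantCoeff
      (∑ k ∈ Finset.range p, (WittVector.teichmuller p ε) ^ k) ≠ 0
    rw [hgeom]; exact aux_geom_ne p O ε hε
  have hε' : (frobeniusEquiv O p).symm ε ≠ 1 := by
    intro h
    apply hε
    have := congrArg (frobeniusEquiv O p) h
    rw [RingEquiv.apply_symm_apply] at this
    rw [this, map_one]
  have hξne : WittVector.constantCoeff ξ ≠ 0 := by
    show WittVector.constantCoeff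
      (∑ k ∈ Finset.range p, (WittVector.teichmuller p ((frobeniusEquiv O p).symm ε)) ^ k) ≠ 0
    rw [hgeom]; exact aux_geom_ne p O _ hε'
  refine ⟨aux_regpair_p p O ξ hξne, aux_regpair_p p O ξt hξtne,
    aux_regpair_p p O μ hμne, aux_nzd p O ξt hξtne, ?_⟩
  -- the pair (ξt, μ): μ is a non-zerodivisor mod ξt
  intro x hx
  obtain ⟨z, rfl⟩ := Ideal.Quotient.mk_surjective x
  rw [← map_mul, Ideal.Quotient.eq_zero_iff_mem, Ideal.mem_span_singleton] at hx
  obtain ⟨y, hy⟩ := hx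
  -- decompose ξt = p + μ * c
  set T : A := WittVector.teichmuller p ε with hT
  set c : A := ∑ k ∈ Finset.range p, ∑ j ∈ Finset.range k, T ^ j with hc
  have hdecomp : ξt = (p : A) + μ * c := by
    have h1 : μ * c = ∑ k ∈ Finset.range p, (T ^ k - 1) := by
      rw [hc, Finset.mul_sum]
      exact Finset.sum_congr rfl fun k _ => mul_geom_sum T k
    have h2 : ∑ k ∈ Finset.range p, (T ^ k - 1) = ξt - (p : A) := by
      rw [Finset.sum_sub_distrib, Finset.sum_const, Finset.card_range, nsmul_eq_mul, mul_one]
    rw [h1, h2]; ring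
  have key : (p : A) * y = μ * (z - c * y) := by
    linear_combination -hy - y * hdecomp
  have hconst : (z - c * y).coeff 0 = 0 := by
    have h3 := congrArg WittVector.constantCoeff key
    rw [map_mul, map_mul, aux_const_p p O, zero_mul] at h3
    have := (mul_eq_zero.1 h3.symm).resolve_left hμne
    simpa [WittVector.constantCoeff_apply] using this
  obtain ⟨w, hw, -⟩ := aux_coeff_zero_dvd p O (z - c * y) hconst
  have hyw : y = μ * w := by
    have h4 : (p : A) * (y - μ * w) = 0 := by
      have : (p : A) * y = μ * ((p : A) * w) := by rw [← hw]; exact key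
      linear_combination this
    have h5 := aux_p_nzd p O _ h4
    rw [sub_eq_zero] at h5
    exact h5
  have hz : z = ξt * w := by
    linear_combination hw + c * hyw - w * hdecomp
  rw [Ideal.Quotient.eq_zero_iff_mem, Ideal.mem_span_singleton]
  exact ⟨w, hz⟩
end

section
/- Let M be a module over A_inf equipped with an additive operator φ^{−1} that is φ^{−1}-semilinear (φ^{−1}(a·x) = φ^{−1}(a)·φ^{−1}(x)), and set ψ_l = ξ^l φ^{−1} for l ≥ 0, where ξ, μ ∈ A_inf are as in Fontaine's theory. Suppose ψ_l is injective on M[μ^j] (the μ^j-torsion of M) for all l > 0 and ψ_l is surjective on M[μ^j] for all l ≥ 0. Then for all l ≥ 0, the induced operator ψ_l on the quotient M[μ^j]/M[μ] is injective, hence bijective. (Injectivity: if μ·ψ_l(x) = 0 then ψ_{l+1}(μx) = 0, and injectivity of ψ_{l+1} on M[μ^{j−1}] forces μx = 0, i.e., x ∈ M[μ].) -/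
/-- Let `M` be a module over `A_inf` (abstracted as a
commutative ring `A`) equipped with an additive `σ`-semilinear operator
`F` (playing `φ⁻¹`, so `σ = φ⁻¹` on scalars), and let `μ, ξ ∈ A` satisfy
`ξ · σ(μ) = μ` (i.e. `ξ = μ/φ⁻¹(μ)`). Set `ψ_l = ξ^l F`. Fix `j ≥ 1`.
If `ψ_l` is injective on the torsion submodule `M[μ^j]` for all `l > 0`
and surjective on `M[μ^j]` for all `l ≥ 0`, then for every `l ≥ 0` the
induced operator `ψ_l` on `M[μ^j]/M[μ]` is injective, hence bijective. -/
theorem psi_bijective_on_torsion_quotient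
    (A : Type) [CommRing A] (σ : A →+* A) (μ ξ : A) (hξμ : ξ * σ μ = μ)
    (M : Type) [AddCommGroup M] [Module A M]
    (F : M →+ M) (hF : ∀ (a : A) (x : M), F (a • x) = σ a • F x)
    (ψ : ℕ → M → M) (hψ : ∀ l x, ψ l x = ξ ^ l • F x)
    (j : ℕ) (hj : 1 ≤ j)
    (hinj : ∀ l > 0, ∀ x ∈ Submodule.torsionBy A M (μ ^ j),
      ∀ y ∈ Submodule.torsionBy A M (μ ^ j), ψ l x = ψ l y → x = y)
    (hsurj : ∀ l : ℕ, ∀ y ∈ Submodule.torsionBy A M (μ ^ j),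
      ∃ x ∈ Submodule.torsionBy A M (μ ^ j), ψ l x = y) :
    ∀ l : ℕ,
      -- the induced map on `M[μ^j]/M[μ]` is injective …
      (∀ x ∈ Submodule.torsionBy A M (μ ^ j),
        ∀ y ∈ Submodule.torsionBy A M (μ ^ j),
          ψ l x - ψ l y ∈ Submodule.torsionBy A M μ →
            x - y ∈ Submodule.torsionBy A M μ) ∧
      -- … and surjective, hence bijective
      (∀ y ∈ Submodule.torsionBy A M (μ ^ j),
        ∃ x ∈ Submodule.torsionBy A M (μ ^ j),
          ψ l x - y ∈ Submodule.torsionBy A M μ) := by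
  intro l
  have key : ∀ z : M, μ • ψ l z = ψ (l + 1) (μ • z) := by
    intro z
    rw [hψ, hψ, hF, smul_smul, smul_smul]
    congr 1
    rw [pow_succ, mul_assoc, hξμ, mul_comm]
  have hmem : ∀ z ∈ Submodule.torsionBy A M (μ ^ j),
      μ • z ∈ Submodule.torsionBy A M (μ ^ j) := by
    intro z hz
    rw [Submodule.mem_torsionBy_iff] at hz ⊢
    rw [smul_smul, mul_comm, ← smul_smul, hz, smul_zero]
  constructor
  · intro x hx y hy h
    rw [Submodule.mem_torsionBy_iff] at h ⊢
    have hsub : μ • (ψ l x - ψ l y) = ψ (l + 1) (μ • x) - ψ (l + 1) (μ • y) := by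
      rw [smul_sub, key, key]
    rw [h] at hsub
    have h1 : ψ (l + 1) (μ • x) = ψ (l + 1) (μ • y) := sub_eq_zero.mp hsub.symm
    have h2 : μ • x = μ • y :=
      hinj (l + 1) (Nat.succ_pos l) (μ • x) (hmem x hx) (μ • y) (hmem y hy) h1
    rw [smul_sub, h2, sub_self]
  · intro y hy
    obtain ⟨x, hx, hxy⟩ := hsurj l y hy
    exact ⟨x, hx, by rw [hxy, sub_self]; exact Submodule.zero_mem _⟩
end

section
/- In the Milnor K-theory of the ring of global invertible functions on Drinfeld symmetric space (or more abstractly: in any Milnor K-group of a commutative ring R with the Steinberg relation {z, 1−z} = 0 for z, 1−z ∈ R^*, and with {x, a} = 0 for a in the image of a fixed subfield of constants K), the following holds: if x_1, ..., x_i ∈ R^* are quotients of K-linear forms and a_1, ..., a_i ∈ K are such that y := 1 + a_1 x_1 + ⋯ + a_i x_i ∈ R^*, with all intermediate elements invertible as required by the inductive argument, then the symbol {x_1, ..., x_i, 1 + a_1 x_1 + ⋯ + a_i x_i} = 0 in K^M_{i+1}(R^*). In particular, for the base case i = 1: if x, 1 + a x ∈ R^* with a ∈ K, then {x, 1 + ax}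 = 0, since {x, 1+ax} = {ax, 1+ax} − {a, 1+ax} = −{a, 1+ax} = 0 using the Steinberg relation and triviality of symbols with constant entries. -/
/-- Milnor K-theory symbols, abstractly: let `R` be a
commutative algebra over a field `K`, and let `s` be a "symbol map" of
length `i + 1` with values in an abelian group `KM` (playing
`K^M_{i+1}(R^*)`): it is multiplicative in each slot, it vanishes on
symbols with a constant entry (`{…, a, …} = 0` for `a ∈ K^*`), it
satisfies the Steinberg relation (`{…, z, 1-z, …} = 0` for adjacent
entries with `z, 1-z ∈ R^*`), and it changes sign under adjacent
transpositions.  If `x₁, …, x_i ∈ R^*`, `a₁, …, a_i ∈ K`, and all the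
partial sums `1 + a₁x₁ + ⋯ + a_kx_k` (for `k = 0, …, i`) are invertible
(in particular `y = 1 + a₁x₁ + ⋯ + a_ix_i ∈ R^*`), then
`{x₁, …, x_i, 1 + a₁x₁ + ⋯ + a_ix_i} = 0`. -/
theorem milnor_symbol_steinberg
    (K : Type) [Field K] (R : Type) [CommRing R] [Algebra K R]
    (i : ℕ)
    (KM : Type) [AddCommGroup KM]
    (s : (Fin (i + 1) → Rˣ) → KM)
    -- multiplicativity in each slot
    (hmul : ∀ (v : Fin (i + 1) → Rˣ) (j : Fin (i + 1)) (w₁ w₂ : Rˣ),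
      s (Function.update v j (w₁ * w₂)) =
        s (Function.update v j w₁) + s (Function.update v j w₂))
    -- symbols with a constant entry vanish
    (hconst : ∀ (v : Fin (i + 1) → Rˣ) (j : Fin (i + 1)),
      (∃ c : Kˣ, (v j : R) = algebraMap K R c) → s v = 0)
    -- Steinberg relation for an adjacent pair (z, 1 - z)
    (hst : ∀ (v : Fin (i + 1) → Rˣ) (j : Fin i),
      (v j.castSucc : R) + (v j.succ : R) = 1 → s v = 0)
    -- antisymmetry under adjacent transpositions
    (hswap : ∀ (v : Fin (i + 1) → Rˣ) (j : Fin i),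
      s (v ∘ Equiv.swap j.castSucc j.succ) = - s v)
    -- the data: x's, coefficients, and invertible partial sums
    (x : Fin i → Rˣ) (a : Fin i → K)
    (u : Fin (i + 1) → Rˣ)
    (hu : ∀ k : Fin (i + 1),
      (u k : R) = 1 + ∑ j ∈ Finset.univ.filter (fun j : Fin i => (j : ℕ) < (k : ℕ)),
        algebraMap K R (a j) * (x j : R)) :
    s (Fin.snoc x (u (Fin.last i))) = 0 := by
  -- Main induction: for every k ≤ i, any vector whose first k slots are
  -- x₀, …, x_{k-1} and whose k-th slot is u_k (remaining slots arbitrary)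
  -- has vanishing symbol.
  have main : ∀ k : ℕ, ∀ hk : k ≤ i, ∀ v : Fin (i + 1) → Rˣ,
      (∀ j : Fin i, (j : ℕ) < k → v j.castSucc = x j) →
      v ⟨k, Nat.lt_succ_of_le hk⟩ = u ⟨k, Nat.lt_succ_of_le hk⟩ → s v = 0 := by
    intro k
    induction k with
    | zero =>
      intro hk v _ hvk
      refine hconst v ⟨0, Nat.lt_succ_of_le hk⟩ ⟨1, ?_⟩
      rw [hvk, hu]
      simp
    | succ k ih =>
      intro hk v hvx hvk
      have hki : k < i := hk
      set jk : Fin i := ⟨k, hki⟩ with hjk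
      set p0 : Fin (i + 1) := jk.castSucc with hp0d
      set p1 : Fin (i + 1) := jk.succ with hp1d
      have hne : p0 ≠ p1 := Fin.ne_of_val_ne (show k ≠ k + 1 by omega)
      have hvp0 : v p0 = x jk := hvx jk (Nat.lt_succ_self k)
      have hvp1 : v p1 = u p1 := by
        have : (⟨k + 1, Nat.lt_succ_of_le hk⟩ : Fin (i + 1)) = p1 := Fin.ext rfl
        rw [this] at hvk; exact hvk
      have hk0 : (⟨k, Nat.lt_succ_of_le (le_of_lt hki)⟩ : Fin (i + 1)) = p0 :=
        Fin.ext rfl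
      -- value of u_{k+1} in terms of u_k
      have hup1 : (u p1 : R) = (u p0 : R) + algebraMap K R (a jk) * (x jk : R) := by
        rw [hu, hu]
        have hv0 : ((p0 : Fin (i+1)) : ℕ) = k := rfl
        have hv1 : ((p1 : Fin (i+1)) : ℕ) = k + 1 := rfl
        rw [hv0, hv1]
        have hins : Finset.univ.filter (fun j : Fin i => (j : ℕ) < k + 1) =
            insert jk (Finset.univ.filter (fun j : Fin i => (j : ℕ) < k)) := by
          ext j
          simp only [Finset.mem_filter, Finset.mem_insert, Finset.mem_univ, true_and,
            Fin.ext_iff]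
          omega
        rw [hins, Finset.sum_insert (by simp [hjk])]
        ring
      set t : Rˣ := u p1 * (u p0)⁻¹ with ht
      have hinv : (u p0 : R) * ((u p0)⁻¹ : Rˣ) = 1 := (u p0).mul_inv
      -- the `A` term: swapping reduces to the inductive hypothesis
      have hA : s (Function.update v p1 (u p0)) = 0 := by
        set w : Fin (i + 1) → Rˣ := Function.update v p1 (u p0) with hw
        have hzero : s (w ∘ Equiv.swap p0 p1) = 0 := by
          refine ih (le_of_lt hki) _ ?_ ?_
          · intro j hj
            have hj0 : j.castSucc ≠ p0 := Fin.ne_of_val_ne (show (j : ℕ) ≠ k by omega)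
            have hj1 : j.castSucc ≠ p1 :=
              Fin.ne_of_val_ne (show (j : ℕ) ≠ k + 1 by omega)
            show w (Equiv.swap p0 p1 j.castSucc) = x j
            rw [Equiv.swap_apply_of_ne_of_ne hj0 hj1, hw, Function.update_of_ne hj1]
            exact hvx j (by omega)
          · show w (Equiv.swap p0 p1 ⟨k, _⟩) = u ⟨k, _⟩
            rw [hk0, Equiv.swap_apply_left, hw, Function.update_self]
        have hsw := hswap w jk
        rw [← hp0d, ← hp1d, hzero] at hsw
        exact neg_eq_zero.mp hsw.symm
      -- the `B` term
      have hB : s (Function.update v p1 t) = 0 := by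
        set v' : Fin (i + 1) → Rˣ := Function.update v p1 t with hv'
        have hv'p0 : v' p0 = x jk := by
          rw [hv', Function.update_of_ne hne, hvp0]
        have hupd0 : ∀ j : Fin i, (j : ℕ) < k → ∀ z : Rˣ,
            Function.update v' p0 z j.castSucc = x j := by
          intro j hj z
          have hj0 : j.castSucc ≠ p0 := Fin.ne_of_val_ne (show (j : ℕ) ≠ k by omega)
          have hj1 : j.castSucc ≠ p1 :=
            Fin.ne_of_val_ne (show (j : ℕ) ≠ k + 1 by omega)
          rw [Function.update_of_ne hj0, hv', Function.update_of_ne hj1]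
          exact hvx j (by omega)
        have hIH0 : s (Function.update v' p0 (u p0)) = 0 := by
          refine ih (le_of_lt hki) _ (fun j hj => hupd0 j hj _) ?_
          rw [hk0, Function.update_self]
        have hone : s (Function.update v' p0 1) = 0 := by
          refine hconst _ p0 ⟨1, ?_⟩
          simp
        have hinvterm : s (Function.update v' p0 (u p0)⁻¹) = 0 := by
          have h1 : u p0 * (u p0)⁻¹ = 1 := by group
          have h2 := hmul v' p0 (u p0) (u p0)⁻¹
          rw [h1, hone, hIH0] at h2
          simpa using h2.symm
        rcases eq_or_ne (a jk) 0 with ha | ha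
        · -- trivial case: t = 1
          have htv : (t : R) = 1 := by
            rw [ht, Units.val_mul, hup1, ha, map_zero, zero_mul, add_zero]
            exact hinv
          refine hconst _ p1 ⟨1, ?_⟩
          rw [hv', Function.update_self, htv]
          simp
        · -- Steinberg case
          set c : Kˣ := Units.mk0 (-(a jk)) (neg_ne_zero.mpr ha) with hc
          set cR : Rˣ := Units.map (algebraMap K R : K →* R) c with hcR
          have hcRv : (cR : R) = algebraMap K R (-(a jk)) := rfl
          set z : Rˣ := cR * ((x jk) * (u p0)⁻¹) with hz
          have hsum : ((Function.update v' p0 z) jk.castSucc : R) +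
              ((Function.update v' p0 z) jk.succ : R) = 1 := by
            rw [← hp0d, ← hp1d, Function.update_self, Function.update_of_ne hne.symm,
              hv', Function.update_self]
            rw [hz, ht]
            simp only [Units.val_mul, hcRv, map_neg, hup1]
            linear_combination hinv
          have hstein : s (Function.update v' p0 z) = 0 := hst _ jk hsum
          have hcterm : s (Function.update v' p0 cR) = 0 := by
            refine hconst _ p0 ⟨c, ?_⟩
            rw [Function.update_self]
            rfl
          have hxterm : s (Function.update v' p0 (x jk)) = s v' := by
            rw [← hv'p0, Function.update_eq_self]
          have e1 := hmul v' p0 cR ((x jk) * (u p0)⁻¹)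
          have e2 := hmul v' p0 (x jk) (u p0)⁻¹
          rw [← hz, hstein, hcterm] at e1
          rw [hxterm, hinvterm] at e2
          rw [e2] at e1
          simpa using e1.symm
      -- combine
      have hkey : u p0 * t = u p1 := by
        rw [ht, mul_comm (u p1) (u p0)⁻¹, mul_inv_cancel_left]
      have hfin := hmul v p1 (u p0) t
      rw [hkey] at hfin
      have hupd_self : Function.update v p1 (u p1) = v := by
        rw [← hvp1, Function.update_eq_self]
      rw [hupd_self, hA, hB] at hfin
      simpa using hfin
  -- apply with k = i
  refine main i (le_refl i) _ ?_ ?_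
  · intro j _
    simp
  · have : (⟨i, Nat.lt_succ_of_le (le_refl i)⟩ : Fin (i + 1)) = Fin.last i :=
      Fin.ext rfl
    rw [this, Fin.snoc_last]
end

section
/- Let M be an A_inf-module with a ξ^•φ^{−1}-structure as follows: ψ_l = ξ^l φ^{−1} are additive operators on M satisfying μ·ψ_l(x) = ψ_{l+1}(μ·x). Suppose given, for every j ≥ 1, a short exact sequence 0 → M_i/μ^j → H^i(T/μ^j) → M_{i+1}[μ^j] → 0 compatible with ψ-operators, where ψ acts invertibly on the middle term H^i(T/μ^j). Then: if ψ_l is injective on M_{i+1}[μ^j] for all l > 0 (with M_0[μ^j] = 0), one deduces by the snake lemma that ψ_{l+j} is bijective on M_i/μ^j for l > 0 and injective for l = 0, and ψ_l is bijective on M_{i+1}[μ^j] for l > 0 and surjective for l = 0. -/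
/-- the diagram chase in BMS Lemma 10.5. Abstract
setting: for fixed `i` and `j ≥ 1`, let `X = M_i/μ^j`,
`Y = H^i(T/μ^j)`, `Z = M_{i+1}[μ^j]` sit in a short exact sequence
`0 → X →f Y →g Z → 0` compatible with the `ψ`-operators: `ψ_{l+j}` acts
on `X` (via `a (l+j)`) and on `Y` (via `b (l+j)`), `ψ_l` acts on `Z`
(via `c l`), and `ψ` acts bijectively on the middle term `Y`.  If `ψ_l`
is injective on `Z = M_{i+1}[μ^j]` for all `l > 0`, then `ψ_{l+j}` is
bijective on `X = M_i/μ^j` for `l > 0` and injective for `l = 0`, and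
`ψ_l` is bijective on `Z = M_{i+1}[μ^j]` for `l > 0` and surjective for
`l = 0`. -/
theorem bms_ten_five_diagram_chase
    (X Y Z : Type) [AddCommGroup X] [AddCommGroup Y] [AddCommGroup Z]
    (f : X →+ Y) (g : Y →+ Z)
    (hfinj : Function.Injective f) (hgsurj : Function.Surjective g)
    (hex : AddMonoidHom.range f = AddMonoidHom.ker g)
    (j : ℕ) (hj : 1 ≤ j)
    (a : ℕ → X →+ X) (b : ℕ → Y →+ Y) (c : ℕ → Z →+ Z)
    (hcommf : ∀ l : ℕ, f.comp (a (l + j)) = (b (l + j)).comp f)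
    (hcommg : ∀ l : ℕ, g.comp (b (l + j)) = (c l).comp g)
    (hb : ∀ m : ℕ, Function.Bijective (b m))
    (hcinj : ∀ l > 0, Function.Injective (c l)) :
    (∀ l > 0, Function.Bijective (a (l + j))) ∧
      Function.Injective (a j) ∧
      (∀ l > 0, Function.Bijective (c l)) ∧
      Function.Surjective (c 0) := by
  have hainj : ∀ m : ℕ, Function.Injective (a (m + j)) := by
    intro m x x' h
    apply hfinj
    have h1 : f (a (m + j) x) = f (a (m + j) x') := congrArg f h
    have h2 := congrFun (congrArg DFunLike.coe (hcommf m)) x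
    have h3 := congrFun (congrArg DFunLike.coe (hcommf m)) x'
    simp only [AddMonoidHom.coe_comp, Function.comp_apply] at h2 h3
    exact (hb (m + j)).injective (by rw [← h2, ← h3, h1])
  have hcsurj : ∀ m : ℕ, Function.Surjective (c m) := by
    intro m z
    obtain ⟨y, hy⟩ := hgsurj z
    obtain ⟨y', hy'⟩ := (hb (m + j)).surjective y
    refine ⟨g y', ?_⟩
    have h2 := congrFun (congrArg DFunLike.coe (hcommg m)) y'
    simp only [AddMonoidHom.coe_comp, Function.comp_apply] at h2
    rw [← h2, hy', hy]
  have hasurj : ∀ l > 0, Function.Surjective (a (l + j)) := by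
    intro l hl x
    obtain ⟨y, hy⟩ := (hb (l + j)).surjective (f x)
    have hgy : g y = 0 := by
      apply hcinj l hl
      have h2 := congrFun (congrArg DFunLike.coe (hcommg l)) y
      simp only [AddMonoidHom.coe_comp, Function.comp_apply] at h2
      rw [← h2, hy, map_zero]
      have : f x ∈ AddMonoidHom.ker g := by rw [← hex]; exact ⟨x, rfl⟩
      exact this
    have : y ∈ AddMonoidHom.range f := by rw [hex]; exact hgy
    obtain ⟨x', hx'⟩ := this
    refine ⟨x', hfinj ?_⟩
    have h2 := congrFun (congrArg DFunLike.coe (hcommf l)) x'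
    simp only [AddMonoidHom.coe_comp, Function.comp_apply] at h2
    rw [h2, hx', hy]
  refine ⟨fun l hl => ⟨hainj l, hasurj l hl⟩, by simpa using hainj 0, fun l hl => ⟨hcinj l hl, hcsurj l⟩, hcsurj 0⟩
end
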